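/- CoKleisli composition over the Writer comonad is associative on accumulating arrows: for arrows f : Set ℕ × Zipper α → Set ℕ × β, g : Set ℕ × Zipper β → Set ℕ × γ, h : Set ℕ × Zipper γ → Set ℕ × δ such that g and h are accumulating (w' ⊆ (g (w', z')).1 and w' ⊆ (h (w', z')).1 for all inputs), the coKleisli composites satisfy (f >=>W g) >=>W h = f >=>W (g >=>W h), where (f >=>W g)(w, z) = g (extendW f (w, z)). -/

import Mathlib

/-- A list zipper: a focused element with left context (stored reversed,
nearest neighbor first) and right context. -/
structure Zipper (α : Type*) where
  left : List α
  focus : α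
  right : List α

namespace Zipper

variable {α β γ δ : Type*}

/-- Extract the focused element. -/
def extract (z : Zipper α) : α := z.focus

/-- Move the focus one step to the left (identity if the left context is empty). -/
def moveLeft : Zipper α → Zipper α
  | ⟨a :: l, c, r⟩ => ⟨l, a, c :: r⟩
  | z => z

/-- Move the focus one step to the right (identity if the right context is empty). -/
def moveRight : Zipper α → Zipper α
  | ⟨l, c, b :: r⟩ => ⟨c :: l, b, r⟩
  | z => z

/-- Auxiliary: successive left shifts, structurally on the left context. -/
def leftsAux : List α → α → List α → List (Zipper α)
  | [], _, _ => []
  | a :: l, c, r => ⟨l, a, c :: r⟩ :: leftsAux l a (c :: r)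

/-- The list [moveLeft z, moveLeft (moveLeft z), …] of successive left shifts. -/
def lefts (z : Zipper α) : List (Zipper α) := leftsAux z.left z.focus z.right

/-- Auxiliary: successive right shifts, structurally on the right context. -/
def rightsAux : List α → α → List α → List (Zipper α)
  | _, _, [] => []
  | l, c, b :: r => ⟨c :: l, b, r⟩ :: rightsAux (c :: l) b r

/-- The list [moveRight z, moveRight (moveRight z), …] of successive right shifts. -/
def rights (z : Zipper α) : List (Zipper α) := rightsAux z.left z.focus z.right

/-- CoKleisli extension: apply the local rule `f` at every position. -/
def extend (f : Zipper α → β) (z : Zipper α) : Zipper β :=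
  ⟨(lefts z).map f, f z, (rights z).map f⟩

/-- The underlying list of a zipper. -/
def toList (z : Zipper α) : List α := z.left.reverse ++ [z.focus] ++ z.right

/-- The zipper refocused at position `i` (intended for `i < (toList z).length`). -/
def focusAt (z : Zipper α) (i : ℕ) : Zipper α :=
  ⟨((toList z).take i).reverse, (toList z).getD i z.focus, (toList z).drop (i + 1)⟩

end Zipper

open Zipper in
/-- Writer comonad counit: empty deletion set paired with the zipper focus. -/
def extractW {α : Type*} (p : Set ℕ × Zipper α) : Set ℕ × α :=
  (∅, Zipper.extract p.2)

open Zipper in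
/-- Writer comonad extension: accumulate (by union) the deletion sets produced
by `f` at every position, and extend the value component over the zipper. -/
def extendW {α β : Type*} (f : Set ℕ × Zipper α → Set ℕ × β)
    (p : Set ℕ × Zipper α) : Set ℕ × Zipper β :=
  (p.1 ∪ ⋃ i ∈ Finset.range (Zipper.toList p.2).length, (f (p.1, Zipper.focusAt p.2 i)).1,
   Zipper.extend (fun z' => (f (p.1, z')).2) p.2)

/-- CoKleisli composition over the Writer comonad. -/
def cokCompW {α β γ : Type*} (f : Set ℕ × Zipper α → Set ℕ × β)
    (g : Set ℕ × Zipper β → Set ℕ × γ) : Set ℕ × Zipper α → Set ℕ × γ :=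
  fun p => g (extendW f p)


namespace Zipper

variable {α β : Type*}

theorem length_toList (z : Zipper α) :
    (toList z).length = z.left.length + 1 + z.right.length := by
  simp [toList]; omega

theorem focusAt_congr {z z' : Zipper α} (h : toList z = toList z') {i : ℕ}
    (hi : i < (toList z).length) : focusAt z i = focusAt z' i := by
  simp only [focusAt, h]
  rw [List.getD_eq_getElem _ _ (h ▸ hi), List.getD_eq_getElem _ _ (h ▸ hi)]

theorem focusAt_self (z : Zipper α) : focusAt z z.left.length = z := by
  obtain ⟨l, c, r⟩ := z
  have h1 : l.length = l.reverse.length := by simp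
  simp only [focusAt, toList]
  congr 1
  · rw [List.append_assoc, h1, List.take_left, List.reverse_reverse]
  · rw [List.append_assoc, h1, List.getD_eq_getElem _ _ (by simp),
      List.getElem_append_right (le_refl _)]
    simp
  · rw [List.append_assoc, h1, List.drop_length_add_append, List.drop_one]; rfl

theorem list_recon (L : List α) (d : α) {i : ℕ} (hi : i < L.length) :
    L.take i ++ [L.getD i d] ++ L.drop (i + 1) = L := by
  rw [List.getD_eq_getElem _ _ hi, List.append_assoc, List.singleton_append,
    List.getElem_cons_drop, List.take_append_drop]

theorem toList_focusAt {z : Zipper α} {i : ℕ} (hi : i < (toList z).length) :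
    toList (focusAt z i) = toList z := by
  show ((toList z).take i).reverse.reverse ++ [(toList z).getD i z.focus]
      ++ (toList z).drop (i + 1) = toList z
  rw [List.reverse_reverse]; exact list_recon _ _ hi

theorem left_length_focusAt {z : Zipper α} {i : ℕ} (hi : i < (toList z).length) :
    (focusAt z i).left.length = i := by
  simp [focusAt]; omega

theorem ext' {z z' : Zipper α} (hl : z.left.length = z'.left.length)
    (ht : toList z = toList z') : z = z' := by
  obtain ⟨l, c, r⟩ := z; obtain ⟨l', c', r'⟩ := z'
  simp only [toList, List.append_assoc] at ht
  simp only at hl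
  obtain ⟨h1, h2⟩ := List.append_inj ht (by simpa using hl)
  rw [List.reverse_inj] at h1
  injection h2 with h3 h4
  subst h1; subst h3; subst h4; rfl



theorem length_leftsAux (l : List α) (c : α) (r : List α) :
    (leftsAux l c r).length = l.length := by
  induction l generalizing c r with
  | nil => rfl
  | cons a l ih => simp [leftsAux, ih]

theorem rights_eq (r : List α) (l : List α) (c : α) :
    Zipper.mk l c r :: rightsAux l c r
      = (List.range (1 + r.length)).map (fun j => focusAt ⟨l, c, r⟩ (l.length + j)) := by
  induction r generalizing l c with
  | nil =>
    have h := focusAt_self (⟨l, c, []⟩ : Zipper α)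
    simp [rightsAux, List.range_succ, h]
  | cons b r ih =>
    have hL : toList (⟨l, c, b :: r⟩ : Zipper α) = toList (⟨c :: l, b, r⟩ : Zipper α) := by
      simp [toList]
    have hself : focusAt (⟨l, c, b :: r⟩ : Zipper α) (l.length + 0) = ⟨l, c, b :: r⟩ := by
      rw [Nat.add_zero]; exact focusAt_self _
    calc Zipper.mk l c (b :: r) :: rightsAux l c (b :: r)
        = ⟨l, c, b :: r⟩ :: (⟨c :: l, b, r⟩ :: rightsAux (c :: l) b r) := rfl
      _ = ⟨l, c, b :: r⟩ :: (List.range (1 + r.length)).map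
            (fun j => focusAt ⟨c :: l, b, r⟩ ((c :: l).length + j)) := by rw [ih]
      _ = (List.range (1 + (b :: r).length)).map
            (fun j => focusAt ⟨l, c, b :: r⟩ (l.length + j)) := by
          have : 1 + (b :: r).length = (1 + r.length) + 1 := by simp; omega
          rw [this, List.range_succ_eq_map]
          simp only [List.map_cons, List.map_map]
          rw [hself]
          congr 1
          apply List.map_congr_left
          intro j hj
          simp only [List.mem_range] at hj
          simp only [Function.comp_apply]
          have hidx : l.length + (j + 1) = (c :: l).length + j := by simp; omega
          rw [hidx]
          refine focusAt_congr hL.symm ?_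
          rw [← hL, length_toList]
          simp only [List.length_cons] at hj ⊢
          omega

theorem lefts_eq (l : List α) (c : α) (r : List α) :
    (leftsAux l c r).reverse ++ Zipper.mk l c r :: rightsAux l c r
      = (List.range (l.length + 1 + r.length)).map (focusAt ⟨l, c, r⟩) := by
  induction l generalizing c r with
  | nil =>
    simp only [leftsAux, List.reverse_nil, List.nil_append]
    rw [rights_eq]
    simp
  | cons a l ih =>
    have hL : toList (⟨l, a, c :: r⟩ : Zipper α) = toList (⟨a :: l, c, r⟩ : Zipper α) := by
      simp [toList]
    calc (leftsAux (a :: l) c r).reverse ++ Zipper.mk (a :: l) c r :: rightsAux (a :: l) c r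
        = (leftsAux l a (c :: r)).reverse ++ Zipper.mk l a (c :: r) :: rightsAux l a (c :: r) := by
          simp only [leftsAux, rightsAux, List.reverse_cons, List.append_assoc]
          rfl
      _ = (List.range (l.length + 1 + (c :: r).length)).map (focusAt ⟨l, a, c :: r⟩) := ih a (c :: r)
      _ = (List.range ((a :: l).length + 1 + r.length)).map (focusAt ⟨a :: l, c, r⟩) := by
          have : l.length + 1 + (c :: r).length = (a :: l).length + 1 + r.length := by simp; omega
          rw [this]
          apply List.map_congr_left
          intro j hj
          simp only [List.mem_range] at hj
          refine focusAt_congr hL ?_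
          rw [length_toList]
          simp only [List.length_cons] at hj ⊢
          omega



theorem toList_extend (k : Zipper α → β) (z : Zipper α) :
    toList (extend k z) = (List.range (toList z).length).map (fun i => k (focusAt z i)) := by
  obtain ⟨l, c, r⟩ := z
  have hlen : (toList (⟨l, c, r⟩ : Zipper α)).length = l.length + 1 + r.length := by
    rw [length_toList]
  rw [hlen]
  have hmm : (List.range (l.length + 1 + r.length)).map
        (fun i => k (focusAt (⟨l, c, r⟩ : Zipper α) i))
      = ((List.range (l.length + 1 + r.length)).map (focusAt (⟨l, c, r⟩ : Zipper α))).map k := by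
    rw [List.map_map]; rfl
  rw [hmm, ← lefts_eq]
  simp [extend, toList, lefts, rights]

theorem left_length_extend (k : Zipper α → β) (z : Zipper α) :
    (extend k z).left.length = z.left.length := by
  simp [extend, lefts, length_leftsAux]

theorem length_toList_extend (k : Zipper α → β) (z : Zipper α) :
    (toList (extend k z)).length = (toList z).length := by
  rw [toList_extend]; simp

theorem focusAt_extend (k : Zipper α → β) {z : Zipper α} {i : ℕ}
    (hi : i < (toList z).length) :
    focusAt (extend k z) i = extend k (focusAt z i) := by
  have hi' : i < (toList (extend k z)).length := by rw [length_toList_extend]; exact hi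
  apply ext'
  · rw [left_length_focusAt hi', left_length_extend, left_length_focusAt hi]
  · rw [toList_focusAt hi', toList_extend, toList_extend, toList_focusAt hi]
    apply List.map_congr_left
    intro j hj
    rw [focusAt_congr (toList_focusAt hi) (by rw [toList_focusAt hi]; simpa using hj)]


end Zipper

open Zipper in
theorem extendW_congr {α β : Type*} (f : Set ℕ × Zipper α → Set ℕ × β)
    (w : Set ℕ) {z z' : Zipper α} (hz : toList z' = toList z) :
    extendW f (w, z')
      = (w ∪ ⋃ i ∈ Finset.range (toList z).length, (f (w, focusAt z i)).1,
         extend (fun y => (f (w, y)).2) z') := by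
  unfold extendW
  simp only [hz]
  congr 2
  apply Set.iUnion₂_congr
  intro i hi
  simp only [Finset.mem_range] at hi
  rw [focusAt_congr hz (by rw [hz]; exact hi)]

open Zipper in
theorem extendW_assoc_core {α β γ : Type*}
    (f : Set ℕ × Zipper α → Set ℕ × β) (g : Set ℕ × Zipper β → Set ℕ × γ)
    (hg : ∀ (w' : Set ℕ) (z' : Zipper β), w' ⊆ (g (w', z')).1)
    (w : Set ℕ) (z : Zipper α) :
    extendW (fun p => g (extendW f p)) (w, z) = extendW g (extendW f (w, z)) := by
  set L := (toList z).length with hLdef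
  have hLpos : 0 < L := by rw [hLdef, length_toList]; omega
  set fw : Zipper α → β := fun z' => (f (w, z')).2 with hfw
  set F : Set ℕ := ⋃ i ∈ Finset.range L, (f (w, focusAt z i)).1 with hF
  set E : Zipper β := extend fw z with hE
  have hEf : extendW f (w, z) = (w ∪ F, E) := rfl
  have key : ∀ i < L, extendW f (w, focusAt z i) = (w ∪ F, focusAt E i) := by
    intro i hi
    rw [extendW_congr f w (toList_focusAt hi), focusAt_extend fw hi]
  have hLE : (toList E).length = L := length_toList_extend fw z
  set S : Set ℕ := ⋃ i ∈ Finset.range L, (g (w ∪ F, focusAt E i)).1 with hS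
  have hWS : w ∪ F ⊆ S := by
    refine (hg (w ∪ F) (focusAt E 0)).trans ?_
    exact fun x hx => Set.mem_biUnion (Finset.mem_range.mpr hLpos) hx
  apply Prod.ext
  · show w ∪ (⋃ i ∈ Finset.range L, (g (extendW f (w, focusAt z i))).1)
        = (w ∪ F) ∪ ⋃ i ∈ Finset.range (toList E).length, (g (w ∪ F, focusAt E i)).1
    rw [hLE]
    have h1 : (⋃ i ∈ Finset.range L, (g (extendW f (w, focusAt z i))).1) = S := by
      apply Set.iUnion₂_congr
      intro i hi
      rw [key i (Finset.mem_range.mp hi)]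
    rw [h1, ← hS]
    rw [Set.union_eq_self_of_subset_left hWS,
      Set.union_eq_self_of_subset_left ((Set.subset_union_left).trans hWS)]
  · show extend (fun z' => (g (extendW f (w, z'))).2) z
        = extend (fun y => (g (w ∪ F, y)).2) E
    apply ext'
    · rw [left_length_extend, left_length_extend, left_length_extend]
    · rw [toList_extend, toList_extend, hLE, ← hLdef]
      apply List.map_congr_left
      intro i hi
      simp only [List.mem_range] at hi
      rw [key i hi, focusAt_extend fw hi]


/-- CoKleisli composition over the Writer comonad is associative on
accumulating arrows. -/
theorem cokCompW_assoc {α β γ δ : Type*}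
    (f : Set ℕ × Zipper α → Set ℕ × β) (g : Set ℕ × Zipper β → Set ℕ × γ)
    (h : Set ℕ × Zipper γ → Set ℕ × δ)
    (hg : ∀ (w' : Set ℕ) (z' : Zipper β), w' ⊆ (g (w', z')).1)
    (hh : ∀ (w' : Set ℕ) (z' : Zipper γ), w' ⊆ (h (w', z')).1) :
    cokCompW (cokCompW f g) h = cokCompW f (cokCompW g h) := by
  funext p
  obtain ⟨w, z⟩ := p
  show h (extendW (fun p => g (extendW f p)) (w, z)) = h (extendW g (extendW f (w, z)))
  rw [extendW_assoc_core f g hg w z]
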